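/- arXiv:1710.09859 — 5 statements merged into one kernel-verified Lean document; each statement's English description precedes it below -/
import Mathlib

section
/- For any disjoint partition of the data points into k clusters, the sum of the between-sample energy statistic and the within energy dispersion satisfies S + W = (s/2)·g(X,X), where g(X,X) = (1/s²) Σ_{i=1}^n Σ_{j=1}^n w_i w_j ρ(x_i, x_j). In particular, S + W does not depend on the choice of partition. -/
open Finset

/-- Weighted within/between cluster energy function
`g(A,B) = (1/(s_A s_B)) Σ_{i∈A} Σ_{j∈B} w_i w_j ρ(x_i, x_j)`. -/
noncomputable def energyG {X : Type*} {n : ℕ} (x : Fin n → X) (w : Fin n → ℝ)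
    (ρ : X → X → ℝ) (A B : Finset (Fin n)) : ℝ :=
  (1 / ((∑ i ∈ A, w i) * (∑ j ∈ B, w j))) * ∑ i ∈ A, ∑ j ∈ B, w i * w j * ρ (x i) (x j)

/-- The within energy dispersion `W = Σ_a (s_a/2) g(C_a, C_a)`. -/
noncomputable def energyW {X : Type*} {n k : ℕ} (x : Fin n → X) (w : Fin n → ℝ)
    (ρ : X → X → ℝ) (C : Fin k → Finset (Fin n)) : ℝ :=
  ∑ a, ((∑ i ∈ C a, w i) / 2) * energyG x w ρ (C a) (C a)

/-- The between-sample energy statistic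
`S = Σ_{a<b} (s_a s_b/(2s)) [2 g(C_a,C_b) − g(C_a,C_a) − g(C_b,C_b)]`. -/
noncomputable def energyS {X : Type*} {n k : ℕ} (x : Fin n → X) (w : Fin n → ℝ)
    (ρ : X → X → ℝ) (C : Fin k → Finset (Fin n)) : ℝ :=
  ∑ a : Fin k, ∑ b ∈ Finset.Ioi a,
    ((∑ i ∈ C a, w i) * (∑ j ∈ C b, w j) / (2 * ∑ c : Fin k, ∑ i ∈ C c, w i)) *
      (2 * energyG x w ρ (C a) (C b) - energyG x w ρ (C a) (C a) -
        energyG x w ρ (C b) (C b))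

/-- `C` is a partition of `{1,…,n}` into `k` nonempty disjoint clusters. -/
def EnergyPartition {n k : ℕ} (C : Fin k → Finset (Fin n)) : Prop :=
  (∀ a b, a ≠ b → Disjoint (C a) (C b)) ∧ (∀ i, ∃ a, i ∈ C a) ∧ ∀ a, (C a).Nonempty

private lemma energy_split {k : ℕ} (g : Fin k → ℝ) (a : Fin k) :
    ∑ b, g b = ∑ b ∈ Finset.Iio a, g b + g a + ∑ b ∈ Finset.Ioi a, g b := by
  have h1 : (Finset.univ : Finset (Fin k)) = (Finset.Iio a ∪ {a}) ∪ Finset.Ioi a := by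
    ext b
    simp only [Finset.mem_univ, Finset.mem_union, Finset.mem_Iio, Finset.mem_singleton,
      Finset.mem_Ioi, true_iff]
    rcases lt_trichotomy b a with h | h | h
    · exact Or.inl (Or.inl h)
    · exact Or.inl (Or.inr h)
    · exact Or.inr h
  have d1 : Disjoint (Finset.Iio a) ({a} : Finset (Fin k)) := by
    simp [Finset.disjoint_singleton_right]
  have d2 : Disjoint (Finset.Iio a ∪ {a}) (Finset.Ioi a) := by
    rw [Finset.disjoint_left]
    intro b hb hb'
    simp only [Finset.mem_union, Finset.mem_Iio, Finset.mem_singleton] at hb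
    simp only [Finset.mem_Ioi] at hb'
    rcases hb with h | rfl
    · exact absurd hb' (lt_asymm h)
    · exact lt_irrefl _ hb'
  rw [h1, Finset.sum_union d2, Finset.sum_union d1, Finset.sum_singleton]

private lemma energy_swap {k : ℕ} (f : Fin k → Fin k → ℝ) :
    ∑ a, ∑ b ∈ Finset.Iio a, f a b = ∑ b, ∑ a ∈ Finset.Ioi b, f a b := by
  apply Finset.sum_comm'
  intro a b
  simp

private lemma energy_swap' {k : ℕ} (f : Fin k → Fin k → ℝ) :
    ∑ a, ∑ b ∈ Finset.Ioi a, f a b = ∑ b, ∑ a ∈ Finset.Iio b, f a b := by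
  apply Finset.sum_comm'
  intro a b
  simp


private lemma sum_sub3 {α : Type*} (T : Finset α) (f g h : α → ℝ) :
    ∑ b ∈ T, (f b - g b - h b) = ∑ b ∈ T, f b - ∑ b ∈ T, g b - ∑ b ∈ T, h b := by
  rw [Finset.sum_sub_distrib, Finset.sum_sub_distrib]

private lemma energy_core {k : ℕ} (sa : Fin k → ℝ) (E : Fin k → Fin k → ℝ) (s : ℝ)
    (hs : s = ∑ a, sa a) (hsane : ∀ a, sa a ≠ 0) (hsne : s ≠ 0)
    (hEsym : ∀ a b, E a b = E b a) :
    (∑ a : Fin k, ∑ b ∈ Finset.Ioi a, (sa a * sa b / (2 * s)) *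
        (2 * ((1 / (sa a * sa b)) * E a b) - (1 / (sa a * sa a)) * E a a -
          (1 / (sa b * sa b)) * E b b))
      + ∑ a, (sa a / 2) * ((1 / (sa a * sa a)) * E a a)
      = (s / 2) * ((1 / s ^ 2) * ∑ a, ∑ b, E a b) := by
  classical
  -- step 1: pointwise simplification of S
  have hS1 : ∀ a : Fin k, ∀ b ∈ Finset.Ioi a, (sa a * sa b / (2 * s)) *
        (2 * ((1 / (sa a * sa b)) * E a b) - (1 / (sa a * sa a)) * E a a -
          (1 / (sa b * sa b)) * E b b)
      = E a b / s - E a a / sa a * sa b / (2 * s) - E b b / sa b * sa a / (2 * s) := by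
    intro a b _
    have ha := hsane a
    have hb := hsane b
    field_simp
  have hS2 : ∀ a : Fin k, ∑ b ∈ Finset.Ioi a,
        (E a b / s - E a a / sa a * sa b / (2 * s) - E b b / sa b * sa a / (2 * s))
      = (∑ b ∈ Finset.Ioi a, E a b) / s
        - E a a / sa a * (∑ b ∈ Finset.Ioi a, sa b) / (2 * s)
        - ∑ b ∈ Finset.Ioi a, E b b / sa b * sa a / (2 * s) := by
    intro a
    rw [sum_sub3]
    congr 1
    congr 1
    · exact (Finset.sum_div _ _ _).symm
    · rw [Finset.mul_sum, Finset.sum_div]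
  have hSw : ∑ a : Fin k, ∑ b ∈ Finset.Ioi a, E b b / sa b * sa a / (2 * s)
      = ∑ b : Fin k, E b b / sa b * (∑ a ∈ Finset.Iio b, sa a) / (2 * s) := by
    rw [energy_swap']
    refine Finset.sum_congr rfl fun b _ => ?_
    rw [Finset.mul_sum, Finset.sum_div]
  have hSfull : (∑ a : Fin k, ∑ b ∈ Finset.Ioi a, (sa a * sa b / (2 * s)) *
        (2 * ((1 / (sa a * sa b)) * E a b) - (1 / (sa a * sa a)) * E a a -
          (1 / (sa b * sa b)) * E b b))
      = (∑ a : Fin k, (∑ b ∈ Finset.Ioi a, E a b) / s)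
        - (∑ a : Fin k, E a a / sa a * (∑ b ∈ Finset.Ioi a, sa b) / (2 * s))
        - (∑ b : Fin k, E b b / sa b * (∑ a ∈ Finset.Iio b, sa a) / (2 * s)) := by
    rw [← hSw]
    rw [← sum_sub3]
    refine Finset.sum_congr rfl fun a _ => ?_
    rw [Finset.sum_congr rfl (hS1 a), hS2 a]
  -- within term pointwise
  have hW1 : ∀ a : Fin k, (sa a / 2) * ((1 / (sa a * sa a)) * E a a) = E a a / (2 * sa a) := by
    intro a
    have := hsane a
    field_simp
  -- key pointwise identity
  have key : ∀ a : Fin k, E a a / (2 * sa a)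
      - E a a / sa a * (∑ b ∈ Finset.Ioi a, sa b) / (2 * s)
      - E a a / sa a * (∑ b ∈ Finset.Iio a, sa b) / (2 * s) = E a a / (2 * s) := by
    intro a
    have hsplit := energy_split sa a
    rw [← hs] at hsplit
    have h2 : (∑ b ∈ Finset.Iio a, sa b) = s - sa a - (∑ b ∈ Finset.Ioi a, sa b) := by
      linarith
    rw [h2]
    have := hsane a
    field_simp
    ring
  have hkeysum : (∑ a : Fin k, E a a / (2 * sa a))
      - (∑ a : Fin k, E a a / sa a * (∑ b ∈ Finset.Ioi a, sa b) / (2 * s))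
      - (∑ a : Fin k, E a a / sa a * (∑ b ∈ Finset.Iio a, sa b) / (2 * s))
      = ∑ a : Fin k, E a a / (2 * s) := by
    rw [← sum_sub3]
    exact Finset.sum_congr rfl fun a _ => key a
  -- decompose the total
  have hIio : ∑ a : Fin k, ∑ b ∈ Finset.Iio a, E a b
      = ∑ a : Fin k, ∑ b ∈ Finset.Ioi a, E a b := by
    rw [energy_swap]
    exact Finset.sum_congr rfl fun b _ => Finset.sum_congr rfl fun a _ => hEsym a b
  have hTot2 : ∑ a : Fin k, ∑ b : Fin k, E a b =
      (∑ a : Fin k, E a a) + 2 * ∑ a : Fin k, ∑ b ∈ Finset.Ioi a, E a b := by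
    calc ∑ a : Fin k, ∑ b : Fin k, E a b
        = ∑ a : Fin k, (∑ b ∈ Finset.Iio a, E a b + E a a + ∑ b ∈ Finset.Ioi a, E a b) :=
          Finset.sum_congr rfl fun a _ => energy_split _ a
      _ = (∑ a : Fin k, (∑ b ∈ Finset.Iio a, E a b + E a a))
            + ∑ a : Fin k, ∑ b ∈ Finset.Ioi a, E a b := Finset.sum_add_distrib
      _ = ((∑ a : Fin k, ∑ b ∈ Finset.Iio a, E a b) + ∑ a : Fin k, E a a)
            + ∑ a : Fin k, ∑ b ∈ Finset.Ioi a, E a b := by rw [Finset.sum_add_distrib]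
      _ = _ := by rw [hIio]; ring
  have hA : ∑ a : Fin k, (∑ b ∈ Finset.Ioi a, E a b) / s
      = (∑ a : Fin k, ∑ b ∈ Finset.Ioi a, E a b) / s := (Finset.sum_div _ _ _).symm
  have hD : ∑ a : Fin k, E a a / (2 * s) = (∑ a : Fin k, E a a) / (2 * s) :=
    (Finset.sum_div _ _ _).symm
  have hW2 : (∑ a, (sa a / 2) * ((1 / (sa a * sa a)) * E a a))
      = ∑ a : Fin k, E a a / (2 * sa a) := Finset.sum_congr rfl fun a _ => hW1 a
  have hRHS : (s / 2) * ((1 / s ^ 2) *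
      ((∑ a : Fin k, E a a) + 2 * ∑ a : Fin k, ∑ b ∈ Finset.Ioi a, E a b))
      = (∑ a : Fin k, E a a) / (2 * s)
        + (∑ a : Fin k, ∑ b ∈ Finset.Ioi a, E a b) / s := by
    field_simp
  rw [hSfull, hW2, hTot2, hRHS]
  linarith [hkeysum, hA, hD]

/-- For any disjoint partition into `k` clusters, `S + W = (s/2)·g(X,X)`, where
`g(X,X) = (1/s²) Σ_i Σ_j w_i w_j ρ(x_i,x_j)` and `s = Σ_i w_i`; in particular
`S + W` does not depend on the choice of partition. -/
theorem stmt0 {X : Type*} {n k : ℕ} (x : Fin n → X) (w : Fin n → ℝ)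
    (hw : ∀ i, 0 < w i) (ρ : X → X → ℝ) (hsym : ∀ a b, ρ a b = ρ b a)
    (C : Fin k → Finset (Fin n)) (hpart : EnergyPartition C) :
    energyS x w ρ C + energyW x w ρ C =
      ((∑ i : Fin n, w i) / 2) *
        ((1 / (∑ i : Fin n, w i) ^ 2) *
          ∑ i : Fin n, ∑ j : Fin n, w i * w j * ρ (x i) (x j)) := by
  classical
  obtain ⟨hdisj, hcover, hne⟩ := hpart
  have hpd : ∀ f : Fin n → ℝ, ∑ i, f i = ∑ a, ∑ i ∈ C a, f i := by
    intro f
    have huniv : (Finset.univ : Finset (Fin n)) = Finset.univ.biUnion C := by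
      ext i
      simpa using hcover i
    rw [huniv, Finset.sum_biUnion]
    intro a _ b _ hab
    exact hdisj a b hab
  have hsane : ∀ a, (∑ i ∈ C a, w i) ≠ 0 :=
    fun a => (Finset.sum_pos (fun i _ => hw i) (hne a)).ne'
  rcases Nat.eq_zero_or_pos k with hk | hk
  · subst hk
    have hn : n = 0 := by
      by_contra h
      obtain ⟨a, _⟩ := hcover ⟨0, Nat.pos_of_ne_zero h⟩
      exact absurd a.2 (by omega)
    subst hn
    simp [energyS, energyW]
  haveI : Nonempty (Fin k) := ⟨⟨0, hk⟩⟩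
  have hsne : (∑ a : Fin k, ∑ i ∈ C a, w i) ≠ 0 := by
    rw [← hpd w]
    exact (Finset.sum_pos (fun i _ => hw i)
      ⟨(hne ⟨0, hk⟩).choose, Finset.mem_univ _⟩).ne'
  have hEsym : ∀ a b, (∑ i ∈ C a, ∑ j ∈ C b, w i * w j * ρ (x i) (x j))
      = ∑ i ∈ C b, ∑ j ∈ C a, w i * w j * ρ (x i) (x j) := by
    intro a b
    rw [Finset.sum_comm]
    refine Finset.sum_congr rfl fun j _ => Finset.sum_congr rfl fun i _ => ?_
    rw [hsym]; ring
  have hTot : ∑ i : Fin n, ∑ j : Fin n, w i * w j * ρ (x i) (x j)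
      = ∑ a : Fin k, ∑ b : Fin k, ∑ i ∈ C a, ∑ j ∈ C b, w i * w j * ρ (x i) (x j) := by
    rw [hpd]
    refine Finset.sum_congr rfl fun a _ => ?_
    calc ∑ i ∈ C a, ∑ j : Fin n, w i * w j * ρ (x i) (x j)
        = ∑ i ∈ C a, ∑ b : Fin k, ∑ j ∈ C b, w i * w j * ρ (x i) (x j) :=
          Finset.sum_congr rfl fun i _ => hpd _
      _ = _ := Finset.sum_comm
  rw [show (∑ i : Fin n, w i) = ∑ a : Fin k, ∑ i ∈ C a, w i from hpd w, hTot]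
  exact energy_core (fun a => ∑ i ∈ C a, w i)
    (fun a b => ∑ i ∈ C a, ∑ j ∈ C b, w i * w j * ρ (x i) (x j))
    (∑ a : Fin k, ∑ i ∈ C a, w i) rfl hsane hsne hEsym
end

section
/- For a fixed number of clusters k, a disjoint partition C_1^⋆,…,C_k^⋆ of the data maximizes the between-sample energy statistic S over all partitions into k clusters if and only if it minimizes the within energy dispersion W over all partitions into k clusters. -/
open Finset

lemma part_sum {n k : ℕ} {C : Fin k → Finset (Fin n)} (hC : EnergyPartition C)
    (f : Fin n → ℝ) : ∑ a, ∑ i ∈ C a, f i = ∑ i, f i := by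
  rw [← Finset.sum_biUnion (fun a _ b _ hab => hC.1 a b hab)]
  congr 1
  apply Finset.eq_univ_iff_forall.mpr
  intro i
  obtain ⟨a, ha⟩ := hC.2.1 i
  exact Finset.mem_biUnion.mpr ⟨a, Finset.mem_univ a, ha⟩

lemma energyG_comm {X : Type*} {n : ℕ} (x : Fin n → X) (w : Fin n → ℝ)
    (ρ : X → X → ℝ) (hsym : ∀ a b, ρ a b = ρ b a) (A B : Finset (Fin n)) :
    energyG x w ρ A B = energyG x w ρ B A := by
  unfold energyG
  rw [Finset.sum_comm, mul_comm (∑ i ∈ A, w i)]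
  congr 1
  refine Finset.sum_congr rfl fun j _ => Finset.sum_congr rfl fun i _ => ?_
  rw [hsym]; ring

lemma energy_key {X : Type*} {n k : ℕ} (x : Fin n → X) (w : Fin n → ℝ)
    (hw : ∀ i, 0 < w i) (ρ : X → X → ℝ) (hsym : ∀ a b, ρ a b = ρ b a)
    (C : Fin k → Finset (Fin n)) (hC : EnergyPartition C) :
    energyS x w ρ C + energyW x w ρ C =
      (∑ i, ∑ j, w i * w j * ρ (x i) (x j)) / (2 * ∑ i, w i) := by
  rcases Nat.eq_zero_or_pos k with hk | hk
  · subst hk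
    have hn : IsEmpty (Fin n) := ⟨fun i => (hC.2.1 i).elim fun a _ => a.elim0⟩
    simp [energyS, energyW, Finset.univ_eq_empty]
  · set g : Fin k → Fin k → ℝ := fun a b => energyG x w ρ (C a) (C b) with hg
    set σ : Fin k → ℝ := fun a => ∑ i ∈ C a, w i with hσ
    have hpos : ∀ a, 0 < σ a := fun a => Finset.sum_pos (fun i _ => hw i) (hC.2.2 a)
    set s : ℝ := ∑ a, σ a with hs
    have hspos : 0 < s := Finset.sum_pos (fun a _ => hpos a)
      (Finset.univ_nonempty_iff.mpr ⟨⟨0, hk⟩⟩)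
    set F : Fin k → Fin k → ℝ := fun a b => (σ a * σ b / (2 * s)) * (g a b - g a a) with hF
    have hgcomm : ∀ a b, g a b = g b a := fun a b => energyG_comm x w ρ hsym _ _
    -- S = ∑ a, ∑ b, F a b
    have hS : energyS x w ρ C = ∑ a, ∑ b, F a b := by
      have h1 : energyS x w ρ C = ∑ a, ∑ b ∈ Ioi a, ((fun b a => F a b) b a + (fun b a => F a b) a b) := by
        unfold energyS
        refine Finset.sum_congr rfl fun a _ => Finset.sum_congr rfl fun b _ => ?_
        simp only [hF]
        rw [hgcomm b a]
        ring
      rw [h1, Finset.sum_sum_Ioi_add_eq_sum_sum_off_diag (fun b a => F a b)]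
      refine Finset.sum_congr rfl fun a _ => ?_
      rw [← Finset.sum_compl_add_sum {a} (F a), Finset.sum_singleton]
      simp only [hF, sub_self, mul_zero, add_zero]
    rw [hS]
    unfold energyW
    rw [← Finset.sum_add_distrib]
    have hmain : ∀ a, (∑ b, F a b) + (σ a / 2) * g a a = ∑ b, (σ a * σ b / (2 * s)) * g a b := by
      intro a
      have : ∑ b, F a b = (∑ b, (σ a * σ b / (2 * s)) * g a b) - (σ a / 2) * g a a := by
        simp only [hF, mul_sub]
        rw [Finset.sum_sub_distrib]
        congr 1
        rw [← Finset.sum_mul, ← Finset.sum_div, ← Finset.mul_sum, ← hs]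
        have := hspos.ne'
        field_simp
      rw [this]; ring
    rw [Finset.sum_congr rfl fun a _ => hmain a]
    have hT : ∀ a b, (σ a * σ b / (2 * s)) * g a b =
        (1 / (2 * s)) * ∑ i ∈ C a, ∑ j ∈ C b, w i * w j * ρ (x i) (x j) := by
      intro a b
      simp only [hg, energyG, ← hσ]
      have ha := (hpos a).ne'
      have hb := (hpos b).ne'
      rw [show (∑ i ∈ C a, w i) = σ a from rfl, show (∑ i ∈ C b, w i) = σ b from rfl]
      field_simp
    rw [Finset.sum_congr rfl fun a _ => Finset.sum_congr rfl fun b _ => hT a b]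
    simp only [← Finset.mul_sum]
    have h2 : ∀ a : Fin k, ∑ b, ∑ i ∈ C a, ∑ j ∈ C b, w i * w j * ρ (x i) (x j)
        = ∑ i ∈ C a, ∑ j, w i * w j * ρ (x i) (x j) := by
      intro a
      rw [Finset.sum_comm]
      exact Finset.sum_congr rfl fun i _ => part_sum hC _
    rw [Finset.sum_congr rfl fun a _ => h2 a, part_sum hC, ← part_sum hC w, ← hs]
    rw [one_div, inv_mul_eq_div]

/-- For a fixed number of clusters `k`, a partition `C⋆` maximizes the between-sample
energy statistic `S` over all partitions into `k` clusters if and only if it minimizes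
the within energy dispersion `W` over all partitions into `k` clusters. -/
theorem stmt1 {X : Type*} {n k : ℕ} (x : Fin n → X) (w : Fin n → ℝ)
    (hw : ∀ i, 0 < w i) (ρ : X → X → ℝ) (hsym : ∀ a b, ρ a b = ρ b a)
    (Cstar : Fin k → Finset (Fin n)) (hstar : EnergyPartition Cstar) :
    (∀ C : Fin k → Finset (Fin n), EnergyPartition C →
        energyS x w ρ C ≤ energyS x w ρ Cstar) ↔
      (∀ C : Fin k → Finset (Fin n), EnergyPartition C →
        energyW x w ρ Cstar ≤ energyW x w ρ C) := by
  constructor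
  · intro h C hCp
    have k1 := energy_key x w hw ρ hsym C hCp
    have k2 := energy_key x w hw ρ hsym Cstar hstar
    have := h C hCp
    linarith
  · intro h C hCp
    have k1 := energy_key x w hw ρ hsym C hCp
    have k2 := energy_key x w hw ρ hsym Cstar hstar
    have := h C hCp
    linarith
end

section
/- If the kernel k generates the semimetric ρ, i.e. ρ(x,y) = κ(x,x) + κ(y,y) − 2κ(x,y), then the within energy dispersion satisfies W = Σ_{a=1}^k Σ_{i∈C_a} w_i κ(x_i,x_i) − Σ_{a=1}^k (1/s_a) Σ_{i∈C_a} Σ_{j∈C_a} w_i w_j κ(x_i,x_j). Consequently, since the first term does not depend on the partition, minimizing W over partitions into k clusters is equivalent to maximizing Σ_{a=1}^k (1/s_a) Σ_{i,j∈C_a} w_i w_j κ(x_i,x_j). -/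
open Finset

/-- The kernel clustering objective `Q = Σ_a (1/s_a) Σ_{i,j∈C_a} w_i w_j κ(x_i,x_j)`. -/
noncomputable def energyQ {X : Type*} {n k : ℕ} (x : Fin n → X) (w : Fin n → ℝ)
    (κ : X → X → ℝ) (C : Fin k → Finset (Fin n)) : ℝ :=
  ∑ a, (1 / ∑ i ∈ C a, w i) * ∑ i ∈ C a, ∑ j ∈ C a, w i * w j * κ (x i) (x j)

/-- If `κ` generates the semimetric `ρ`, i.e. `ρ(x,y) = κ(x,x) + κ(y,y) − 2κ(x,y)`,
then `W = Σ_a Σ_{i∈C_a} w_i κ(x_i,x_i) − Σ_a (1/s_a) Σ_{i,j∈C_a} w_i w_j κ(x_i,x_j)`;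
consequently, minimizing `W` over partitions into `k` clusters is equivalent to
maximizing `Σ_a (1/s_a) Σ_{i,j∈C_a} w_i w_j κ(x_i,x_j)`. -/
theorem stmt2 {X : Type*} {n k : ℕ} (x : Fin n → X) (w : Fin n → ℝ)
    (hw : ∀ i, 0 < w i) (ρ : X → X → ℝ) (κ : X → X → ℝ)
    (hκsym : ∀ a b, κ a b = κ b a)
    (hgen : ∀ a b, ρ a b = κ a a + κ b b - 2 * κ a b)
    (Cstar : Fin k → Finset (Fin n)) (hstar : EnergyPartition Cstar) :
    (∀ C : Fin k → Finset (Fin n), EnergyPartition C →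
        energyW x w ρ C =
          (∑ a : Fin k, ∑ i ∈ C a, w i * κ (x i) (x i)) - energyQ x w κ C) ∧
      ((∀ C : Fin k → Finset (Fin n), EnergyPartition C →
          energyW x w ρ Cstar ≤ energyW x w ρ C) ↔
        (∀ C : Fin k → Finset (Fin n), EnergyPartition C →
          energyQ x w κ C ≤ energyQ x w κ Cstar)) := by

  have hmain : ∀ C : Fin k → Finset (Fin n), EnergyPartition C →
      energyW x w ρ C =
        (∑ a : Fin k, ∑ i ∈ C a, w i * κ (x i) (x i)) - energyQ x w κ C := by
    intro C hC
    unfold energyW energyQ energyG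
    rw [← Finset.sum_sub_distrib]
    refine Finset.sum_congr rfl fun a _ => ?_
    have hs : 0 < ∑ i ∈ C a, w i := Finset.sum_pos (fun i _ => hw i) (hC.2.2 a)
    set s := ∑ i ∈ C a, w i with hsdef
    set A := ∑ i ∈ C a, w i * κ (x i) (x i) with hA
    set K := ∑ i ∈ C a, ∑ j ∈ C a, w i * w j * κ (x i) (x j) with hK
    have e1 : (∑ i ∈ C a, ∑ j ∈ C a, w i * w j * κ (x i) (x i)) = A * s := by
      rw [hA, Finset.sum_mul]
      refine Finset.sum_congr rfl fun i _ => ?_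
      rw [hsdef, Finset.mul_sum]
      exact Finset.sum_congr rfl fun j _ => by ring
    have e2 : (∑ i ∈ C a, ∑ j ∈ C a, w i * w j * κ (x j) (x j)) = s * A := by
      rw [hsdef, Finset.sum_mul]
      refine Finset.sum_congr rfl fun i _ => ?_
      rw [hA, Finset.mul_sum]
      exact Finset.sum_congr rfl fun j _ => by ring
    have h1 : ∑ i ∈ C a, ∑ j ∈ C a, w i * w j * ρ (x i) (x j)
        = 2 * s * A - 2 * K := by
      have expand : ∀ i j : Fin n, w i * w j * ρ (x i) (x j)
          = w i * w j * κ (x i) (x i) + w i * w j * κ (x j) (x j)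
            - 2 * (w i * w j * κ (x i) (x j)) := fun i j => by rw [hgen]; ring
      simp_rw [expand, Finset.sum_sub_distrib, Finset.sum_add_distrib,
        ← Finset.mul_sum]
      rw [e1, e2, hK]
      ring
    rw [h1]
    field_simp
  refine ⟨hmain, ?_⟩
  have htot : ∀ C : Fin k → Finset (Fin n), EnergyPartition C →
      (∑ a : Fin k, ∑ i ∈ C a, w i * κ (x i) (x i)) = ∑ i, w i * κ (x i) (x i) := by
    intro C hC
    rw [← Finset.sum_biUnion (fun a _ b _ hab => hC.1 a b hab)]
    congr 1
    apply Finset.eq_univ_iff_forall.mpr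
    intro i
    obtain ⟨a, ha⟩ := hC.2.1 i
    exact Finset.mem_biUnion.mpr ⟨a, Finset.mem_univ a, ha⟩
  constructor
  · intro h C hC
    have h1 := hmain C hC
    have h2 := hmain Cstar hstar
    have := h C hC
    rw [htot C hC] at h1
    rw [htot Cstar hstar] at h2
    linarith
  · intro h C hC
    have h1 := hmain C hC
    have h2 := hmain Cstar hstar
    have := h C hC
    rw [htot C hC] at h1
    rw [htot Cstar hstar] at h2
    linarith
end

section
/- Let ρ : X × X → ℝ be a symmetric semimetric of negative type with ρ(x,x) = 0 for all x, and fix a base point x_0 ∈ X. Define κ(x,y) = (1/2)[ρ(x,x_0) + ρ(y,x_0) − ρ(x,y)]. Then κ is a positive-definite kernel: for all points x_1,…,x_n ∈ X and all real numbers c_1,…,c_n (with no constraint on their sum), Σ_{i,j=1}^n c_i c_j κ(x_i,x_j) ≥ 0. -/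
open Finset

/-- Let `ρ` be a symmetric semimetric of negative type with `ρ(x,x) = 0`, and fix a
base point `x₀`. Define `κ(x,y) = (1/2)[ρ(x,x₀) + ρ(y,x₀) − ρ(x,y)]`. Then `κ` is a
positive-definite kernel: `Σ_{i,j} c_i c_j κ(x_i,x_j) ≥ 0` for all points
`x_1,…,x_n` and all real coefficients `c_1,…,c_n`. -/
theorem stmt8 {X : Type*} (ρ : X → X → ℝ) (hsym : ∀ a b, ρ a b = ρ b a)
    (hzero : ∀ a, ρ a a = 0)
    (hneg : ∀ (m : ℕ) (y : Fin m → X) (c : Fin m → ℝ), (∑ i, c i = 0) →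
      ∑ i : Fin m, ∑ j : Fin m, c i * c j * ρ (y i) (y j) ≤ 0)
    (x₀ : X) {n : ℕ} (x : Fin n → X) (c : Fin n → ℝ) :
    0 ≤ ∑ i : Fin n, ∑ j : Fin n,
        c i * c j * ((1 / 2) * (ρ (x i) x₀ + ρ (x j) x₀ - ρ (x i) (x j))) := by
  set C := ∑ i, c i with hC
  set A := ∑ i, c i * ρ (x i) x₀ with hA
  set B := ∑ i : Fin n, ∑ j : Fin n, c i * c j * ρ (x i) (x j) with hB
  have key := hneg (n+1) (Fin.snoc x x₀) (Fin.snoc c (-C)) (by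
    rw [Fin.sum_univ_castSucc]
    simp [hC])
  have hkey : B - 2 * C * A ≤ 0 := by
    rw [Fin.sum_univ_castSucc] at key
    simp only [Fin.sum_univ_castSucc, Fin.snoc_castSucc, Fin.snoc_last,
      hzero, mul_zero, add_zero, Finset.sum_add_distrib] at key
    have h1 : ∀ j : Fin n, ρ x₀ (x j) = ρ (x j) x₀ := fun j => hsym _ _
    simp only [h1] at key
    have e1 : (∑ i, c i * -C * ρ (x i) x₀) = -(C * A) := by
      have : (∑ i, c i * -C * ρ (x i) x₀) = -C * ∑ i, c i * ρ (x i) x₀ := by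
        rw [Finset.mul_sum]
        exact Finset.sum_congr rfl fun i _ => by ring
      rw [this, ← hA]; ring
    have e2 : (∑ j, -C * c j * ρ (x j) x₀) = -(C * A) := by
      have : (∑ j, -C * c j * ρ (x j) x₀) = -C * ∑ j, c j * ρ (x j) x₀ := by
        rw [Finset.mul_sum]
        exact Finset.sum_congr rfl fun i _ => by ring
      rw [this, ← hA]; ring
    rw [e1, e2, ← hB] at key
    linarith
  have hgoal : ∑ i : Fin n, ∑ j : Fin n,
      c i * c j * ((1 / 2) * (ρ (x i) x₀ + ρ (x j) x₀ - ρ (x i) (x j)))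
      = C * A - B / 2 := by
    have h2 : A * C = ∑ i : Fin n, ∑ j : Fin n, (c i * ρ (x i) x₀) * c j :=
      Finset.sum_mul_sum _ _ _ _
    have h3 : C * A = ∑ i : Fin n, ∑ j : Fin n, c i * (c j * ρ (x j) x₀) :=
      Finset.sum_mul_sum _ _ _ _
    rw [show C * A - B / 2 = (1/2) * (A * C + C * A - B) by ring, h2, h3, hB]
    simp only [← Finset.sum_add_distrib, ← Finset.sum_sub_distrib, Finset.mul_sum]
    exact Finset.sum_congr rfl fun i _ => Finset.sum_congr rfl fun j _ => by ring
  rw [hgoal]; linarith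
end

section
/- Define the total clustering objective Q = Σ_{a=1}^k Q_a/s_a, where Q_a = Σ_{i∈C_a} Σ_{j∈C_a} w_i w_j κ(x_i,x_j), and for a data point x_i let Q_a(x_i) = Σ_{j∈C_a} w_i w_j κ(x_i,x_j). Suppose x_i currently belongs to cluster C_b with s_b > w_i, and let Q′ be the objective of the partition obtained by moving x_i from C_b to a different cluster C_ℓ. Then the change ΔQ = Q′ − Q equals (1/(s_b − w_i))[(w_i/s_b) Q_b − 2 Q_b(x_i) + w_i² κ(x_i,x_i)] − (1/(s_ℓ + w_i))[(w_i/s_ℓ) Q_ℓ − 2 Q_ℓ(x_i) − w_i² κ(x_i,x_i)]. In particular, if this expression is positive, reassigning x_i to C_ℓ strictly increases Q. -/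
open Finset

/-- The internal cost of a cluster `A`: `Q_A = Σ_{p,q∈A} w_p w_q κ(x_p,x_q)`. -/
noncomputable def energyQcl {X : Type*} {n : ℕ} (x : Fin n → X) (w : Fin n → ℝ)
    (κ : X → X → ℝ) (A : Finset (Fin n)) : ℝ :=
  ∑ p ∈ A, ∑ q ∈ A, w p * w q * κ (x p) (x q)

/-- The cost of point `x_i` with cluster `A`: `Q_A(x_i) = Σ_{j∈A} w_i w_j κ(x_i,x_j)`. -/
noncomputable def energyQpt {X : Type*} {n : ℕ} (x : Fin n → X) (w : Fin n → ℝ)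
    (κ : X → X → ℝ) (A : Finset (Fin n)) (i : Fin n) : ℝ :=
  ∑ j ∈ A, w i * w j * κ (x i) (x j)

/-- The total clustering objective `Q = Σ_a Q_a / s_a`. -/
noncomputable def energyQtot {X : Type*} {n k : ℕ} (x : Fin n → X) (w : Fin n → ℝ)
    (κ : X → X → ℝ) (C : Fin k → Finset (Fin n)) : ℝ :=
  ∑ a, energyQcl x w κ (C a) / (∑ p ∈ C a, w p)

lemma qcl_insert {X : Type*} {n : ℕ} (x : Fin n → X) (w : Fin n → ℝ)
    (κ : X → X → ℝ) (hκsym : ∀ a b, κ a b = κ b a)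
    (A : Finset (Fin n)) (i : Fin n) (hi : i ∉ A) :
    energyQcl x w κ (insert i A) =
      energyQcl x w κ A + 2 * energyQpt x w κ A i + (w i)^2 * κ (x i) (x i) := by
  unfold energyQcl energyQpt
  rw [Finset.sum_insert hi, Finset.sum_insert hi]
  have h1 : ∀ p ∈ A, ∑ q ∈ insert i A, w p * w q * κ (x p) (x q)
      = w p * w i * κ (x p) (x i) + ∑ q ∈ A, w p * w q * κ (x p) (x q) :=
    fun p _ => Finset.sum_insert hi
  rw [Finset.sum_congr rfl h1, Finset.sum_add_distrib]
  have h2 : ∑ p ∈ A, w p * w i * κ (x p) (x i) = ∑ j ∈ A, w i * w j * κ (x i) (x j) :=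
    Finset.sum_congr rfl fun p _ => by rw [hκsym]; ring
  rw [h2]; ring

/-- Moving `x_i` from its cluster `C_b` (with `s_b > w_i`) to another cluster `C_ℓ`
changes the total objective `Q` by
`ΔQ = (1/(s_b−w_i))[(w_i/s_b)Q_b − 2Q_b(x_i) + w_i²κ(x_i,x_i)]
    − (1/(s_ℓ+w_i))[(w_i/s_ℓ)Q_ℓ − 2Q_ℓ(x_i) − w_i²κ(x_i,x_i)]`;
in particular if this is positive, the reassignment strictly increases `Q`. -/
theorem stmt14 {X : Type*} {n k : ℕ} (x : Fin n → X) (w : Fin n → ℝ)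
    (hw : ∀ i, 0 < w i) (κ : X → X → ℝ) (hκsym : ∀ a b, κ a b = κ b a)
    (C : Fin k → Finset (Fin n)) (hpart : EnergyPartition C)
    (i : Fin n) (b ℓ : Fin k) (hib : i ∈ C b) (hlb : ℓ ≠ b)
    (hsb : w i < ∑ p ∈ C b, w p) :
    let C' : Fin k → Finset (Fin n) := fun a =>
      if a = b then (C b).erase i else if a = ℓ then insert i (C ℓ) else C a
    let Δ : ℝ :=
      (1 / ((∑ p ∈ C b, w p) - w i)) *
          ((w i / ∑ p ∈ C b, w p) * energyQcl x w κ (C b) -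
            2 * energyQpt x w κ (C b) i + (w i) ^ 2 * κ (x i) (x i)) -
        (1 / ((∑ p ∈ C ℓ, w p) + w i)) *
          ((w i / ∑ p ∈ C ℓ, w p) * energyQcl x w κ (C ℓ) -
            2 * energyQpt x w κ (C ℓ) i - (w i) ^ 2 * κ (x i) (x i))
    energyQtot x w κ C' - energyQtot x w κ C = Δ ∧
      (0 < Δ → energyQtot x w κ C < energyQtot x w κ C') := by
  intro C' Δ
  obtain ⟨hdisj, -, hne⟩ := hpart
  have hil : i ∉ C ℓ := fun h => Finset.disjoint_left.mp (hdisj ℓ b hlb) h hib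
  set sb := ∑ p ∈ C b, w p with hsbdef
  set sl := ∑ p ∈ C ℓ, w p with hsldef
  have hsl0 : 0 < sl := Finset.sum_pos (fun p _ => hw p) (hne ℓ)
  have hsb0 : 0 < sb := lt_trans (hw i) hsb
  have hsbne : sb - w i ≠ 0 := by linarith
  have hslne : sl + w i ≠ 0 := by have := hw i; positivity
  -- sums over modified clusters
  have hCb' : C' b = (C b).erase i := by simp [C']
  have hCl' : C' ℓ = insert i (C ℓ) := by simp [C', hlb]
  have hwerase : ∑ p ∈ (C b).erase i, w p = sb - w i := by
    rw [Finset.sum_erase_eq_sub hib]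
  have hwins : ∑ p ∈ insert i (C ℓ), w p = sl + w i := by
    rw [Finset.sum_insert hil, add_comm]
  have hQl : energyQcl x w κ (insert i (C ℓ)) =
      energyQcl x w κ (C ℓ) + 2 * energyQpt x w κ (C ℓ) i + (w i)^2 * κ (x i) (x i) :=
    qcl_insert x w κ hκsym (C ℓ) i hil
  have hierase : i ∉ (C b).erase i := Finset.notMem_erase i _
  have hQb : energyQcl x w κ ((C b).erase i) =
      energyQcl x w κ (C b) - 2 * energyQpt x w κ (C b) i + (w i)^2 * κ (x i) (x i) := by
    have h1 := qcl_insert x w κ hκsym ((C b).erase i) i hierase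
    rw [Finset.insert_erase hib] at h1
    have h2 : energyQpt x w κ (C b) i =
        energyQpt x w κ ((C b).erase i) i + w i * w i * κ (x i) (x i) := by
      unfold energyQpt
      rw [← Finset.sum_erase_add _ _ hib]
    have hp : (w i)^2 = w i * w i := sq (w i)
    linarith [h1, h2]
  have hmain : energyQtot x w κ C' - energyQtot x w κ C = Δ := by
    unfold energyQtot
    rw [← Finset.sum_sub_distrib]
    rw [Finset.sum_eq_add b ℓ (Ne.symm hlb)
      (fun c _ hc => by
        have h1 : C' c = C c := by simp [C', hc.1, hc.2]
        rw [h1, sub_self])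
      (fun h => absurd (Finset.mem_univ b) h)
      (fun h => absurd (Finset.mem_univ ℓ) h)]
    rw [hCb', hCl', hwerase, hwins, hQl, hQb]
    show _ = Δ
    simp only [Δ]
    rw [← hsbdef, ← hsldef]
    field_simp
    ring
  refine ⟨hmain, fun h => ?_⟩
  linarith
end
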